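/- Let M be a loopless matroid on a finite ground set E with |E| = n and rank function r. Let ∅ = F_0 ⊊ F_1 ⊊ ⋯ ⊊ F_k = E be a chain of subsets, set E_i = F_i \ F_{i−1} and r_i = r(F_i) − r(F_{i−1}), and assume r_i ≥ 1 for all i and that the densities λ_i = |E_i| / r_i satisfy λ_1 > λ_2 > ⋯ > λ_k ≥ 1 (as holds for the principal sequence of M). Let w_1 ≥ w_2 ≥ ⋯ ≥ w_n ≥ 0 be real weights. Then the average over all bijections σ : {1,…,n} → E (with element σ(j) receiving weight w_j) of the maximum weight of a set I ⊆ E satisfying |I ∩ E_i| ≤ r_i for all i, is at least (1 − 1/e) times the average over all bijections σ of the maximum weight of an independent set of M. -/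

import Mathlib

/-- A matroid on a finite ground set `E`, given by its rank function `r`,
where `r X` is the size of a largest independent subset of `X`. -/
structure FinMatroid (α : Type*) [DecidableEq α] where
  E : Finset α
  r : Finset α → ℕ
  r_empty : r ∅ = 0
  r_le_card : ∀ X : Finset α, r X ≤ X.card
  r_mono : ∀ ⦃X Y : Finset α⦄, X ⊆ Y → r X ≤ r Y
  r_submod : ∀ X Y : Finset α, r (X ∪ Y) + r (X ∩ Y) ≤ r X + r Y

/-- A matroid is loopless if every singleton of the ground set is independent. -/
def FinMatroid.Loopless {α : Type*} [DecidableEq α] (M : FinMatroid α) : Prop :=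
  ∀ e ∈ M.E, M.r {e} = 1
open Finset

section Aux
variable {α : Type*} [DecidableEq α]
noncomputable def gsum (q : ℝ) (E A : Finset α) (m : ℕ) : ℝ :=
  ∑ S ∈ E.powersetCard m, q ^ (S ∩ A).card

lemma gsum_nonneg {q : ℝ} (hq : 0 ≤ q) (E A : Finset α) (m : ℕ) : 0 ≤ gsum q E A m :=
  Finset.sum_nonneg fun _ _ => pow_nonneg hq _

lemma gsum_zero (q : ℝ) (E A : Finset α) : gsum q E A 0 = 1 := by
  simp [gsum]

lemma gsum_empty (q : ℝ) (E : Finset α) (m : ℕ) :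
    gsum q E ∅ m = ((E.card.choose m : ℕ) : ℝ) := by
  simp [gsum, Finset.card_powersetCard]

lemma gsum_split (q : ℝ) (E A : Finset α) {x : α} (hx : x ∈ E) (m : ℕ) :
    gsum q E A (m + 1) = gsum q (E.erase x) A (m + 1) +
      ∑ S ∈ (E.erase x).powersetCard m, q ^ ((insert x S) ∩ A).card := by
  unfold gsum
  conv_lhs => rw [← Finset.insert_erase hx,
    Finset.powersetCard_succ_insert (Finset.notMem_erase _ _)]
  rw [Finset.sum_union, Finset.sum_image]
  · intro S hS T hT hST
    have hxS : x ∉ S := fun h => (Finset.notMem_erase x E)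
      ((Finset.mem_powersetCard.1 hS).1 h)
    have hxT : x ∉ T := fun h => (Finset.notMem_erase x E)
      ((Finset.mem_powersetCard.1 hT).1 h)
    have := congrArg (Finset.erase · x) hST
    simpa [Finset.erase_insert, hxS, hxT] using this
  · rw [Finset.disjoint_left]
    intro S hS hS'
    obtain ⟨T, hT, rfl⟩ := Finset.mem_image.1 hS'
    exact (Finset.notMem_erase x E) ((Finset.mem_powersetCard.1 hS).1 (Finset.mem_insert_self _ _))
lemma gsum_R1 (q : ℝ) (E A : Finset α) {x : α} (hx : x ∈ E) (hxA : x ∉ A) (m : ℕ) :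
    gsum q E A (m + 1) = gsum q (E.erase x) A (m + 1) + gsum q (E.erase x) A m := by
  rw [gsum_split q E A hx m]
  congr 1
  apply Finset.sum_congr rfl
  intro S hS
  congr 2
  ext y
  simp only [Finset.mem_inter, Finset.mem_insert]
  constructor
  · rintro ⟨(rfl | h), h2⟩
    · exact absurd h2 hxA
    · exact ⟨h, h2⟩
  · rintro ⟨h1, h2⟩; exact ⟨Or.inr h1, h2⟩

lemma gsum_R2 (q : ℝ) (E A : Finset α) {x : α} (hx : x ∈ E) (hxA : x ∈ A) (m : ℕ) :
    gsum q E A (m + 1) = gsum q (E.erase x) (A.erase x) (m + 1) +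
      q * gsum q (E.erase x) (A.erase x) m := by
  rw [gsum_split q E A hx m]
  congr 1
  · apply Finset.sum_congr rfl
    intro S hS
    have hxS : x ∉ S := fun h => (Finset.notMem_erase x E) ((Finset.mem_powersetCard.1 hS).1 h)
    congr 2
    ext y
    simp only [Finset.mem_inter, Finset.mem_erase]
    constructor
    · rintro ⟨h1, h2⟩
      exact ⟨h1, ⟨fun hy => hxS (hy ▸ h1), h2⟩⟩
    · rintro ⟨h1, _, h2⟩; exact ⟨h1, h2⟩
  · rw [gsum, Finset.mul_sum]
    apply Finset.sum_congr rfl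
    intro S hS
    have hxS : x ∉ S := fun h => (Finset.notMem_erase x E) ((Finset.mem_powersetCard.1 hS).1 h)
    have : (insert x S) ∩ A = insert x (S ∩ A.erase x) := by
      ext y
      simp only [Finset.mem_inter, Finset.mem_insert, Finset.mem_erase]
      constructor
      · rintro ⟨(rfl | h1), h2⟩
        · exact Or.inl rfl
        · exact Or.inr ⟨h1, fun hy => hxS (hy ▸ h1), h2⟩
      · rintro (rfl | ⟨h1, _, h2⟩)
        · exact ⟨Or.inl rfl, hxA⟩
        · exact ⟨Or.inr h1, h2⟩
    rw [this, Finset.card_insert_of_notMem (fun h => hxS (Finset.mem_inter.1 h).1), pow_succ]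
    ring

lemma gsum_mono {q : ℝ} (hq0 : 0 ≤ q) (hq1 : q ≤ 1) (E A : Finset α) (m : ℕ) :
    ((m + 1 : ℕ) : ℝ) * gsum q E A (m + 1) ≤ ((E.card - m : ℕ) : ℝ) * gsum q E A m := by
  have key : ∑ S ∈ E.powersetCard (m+1), ((m+1 : ℕ) : ℝ) * q ^ (S ∩ A).card
      = ∑ T ∈ E.powersetCard m, ∑ x ∈ E \ T, q ^ ((insert x T) ∩ A).card := by
    have lhs : ∑ S ∈ E.powersetCard (m+1), ((m+1 : ℕ) : ℝ) * q ^ (S ∩ A).card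
        = ∑ S ∈ E.powersetCard (m+1), ∑ x ∈ S, q ^ (S ∩ A).card := by
      apply Finset.sum_congr rfl
      intro S hS
      rw [Finset.sum_const, (Finset.mem_powersetCard.1 hS).2, nsmul_eq_mul]
    rw [lhs, Finset.sum_sigma', Finset.sum_sigma']
    apply Finset.sum_nbij' (fun p => (⟨p.1.erase p.2, p.2⟩ : Σ _ : Finset α, α))
      (fun p => (⟨insert p.2 p.1, p.2⟩ : Σ _ : Finset α, α))
    · rintro ⟨S, x⟩ hp
      simp only [Finset.mem_sigma, Finset.mem_powersetCard] at hp ⊢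
      obtain ⟨⟨hSE, hScard⟩, hxS⟩ := hp
      refine ⟨⟨(Finset.erase_subset _ _).trans hSE, ?_⟩, ?_⟩
      · rw [Finset.card_erase_of_mem hxS, hScard]; rfl
      · exact Finset.mem_sdiff.2 ⟨hSE hxS, Finset.notMem_erase _ _⟩
    · rintro ⟨T, x⟩ hp
      simp only [Finset.mem_sigma, Finset.mem_powersetCard, Finset.mem_sdiff] at hp ⊢
      obtain ⟨⟨hTE, hTcard⟩, hxE, hxT⟩ := hp
      refine ⟨⟨Finset.insert_subset hxE hTE, ?_⟩, Finset.mem_insert_self _ _⟩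
      rw [Finset.card_insert_of_notMem hxT, hTcard]
    · rintro ⟨S, x⟩ hp
      simp only [Finset.mem_sigma] at hp
      simp [Finset.insert_erase hp.2]
    · rintro ⟨T, x⟩ hp
      simp only [Finset.mem_sigma, Finset.mem_sdiff] at hp
      simp [Finset.erase_insert hp.2.2]
    · rintro ⟨S, x⟩ hp
      simp only [Finset.mem_sigma] at hp
      simp [Finset.insert_erase hp.2]
  have bound : ∀ T ∈ E.powersetCard m, ∑ x ∈ E \ T, q ^ ((insert x T) ∩ A).card
      ≤ ((E.card - m : ℕ) : ℝ) * q ^ (T ∩ A).card := by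
    intro T hT
    obtain ⟨hTE, hTcard⟩ := Finset.mem_powersetCard.1 hT
    calc ∑ x ∈ E \ T, q ^ ((insert x T) ∩ A).card
        ≤ ∑ x ∈ E \ T, q ^ (T ∩ A).card := by
          apply Finset.sum_le_sum
          intro x hx
          apply pow_le_pow_of_le_one hq0 hq1
          exact Finset.card_le_card (Finset.inter_subset_inter (Finset.subset_insert _ _) le_rfl)
      _ = ((E.card - m : ℕ) : ℝ) * q ^ (T ∩ A).card := by
          rw [Finset.sum_const, Finset.card_sdiff_of_subset hTE, hTcard, nsmul_eq_mul]
  calc ((m + 1 : ℕ) : ℝ) * gsum q E A (m + 1)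
      = ∑ S ∈ E.powersetCard (m+1), ((m+1 : ℕ) : ℝ) * q ^ (S ∩ A).card := by
        rw [gsum, Finset.mul_sum]
    _ = ∑ T ∈ E.powersetCard m, ∑ x ∈ E \ T, q ^ ((insert x T) ∩ A).card := key
    _ ≤ ∑ T ∈ E.powersetCard m, ((E.card - m : ℕ) : ℝ) * q ^ (T ∩ A).card :=
        Finset.sum_le_sum bound
    _ = ((E.card - m : ℕ) : ℝ) * gsum q E A m := by rw [gsum, Finset.mul_sum]
lemma choose_id (n m : ℕ) (hn : 1 ≤ n) :
    n * ((n - 1).choose m) = (n.choose (m+1)) * (m+1) := by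
  have := Nat.add_one_mul_choose_eq (n - 1) m
  rwa [Nat.sub_add_cancel hn] at this

-- (M') unnormalized: for x ∈ E, x ∉ A, (m'+1) * g E A (m'+1) ≤ n * g E' A m'
lemma gsum_M' {q : ℝ} (hq0 : 0 ≤ q) (hq1 : q ≤ 1) (E A : Finset α) {x : α} (hx : x ∈ E)
    (hxA : x ∉ A) {m : ℕ} (hm : m + 1 ≤ E.card) :
    ((m + 1 : ℕ) : ℝ) * gsum q E A (m + 1) ≤ (E.card : ℝ) * gsum q (E.erase x) A m := by
  rw [gsum_R1 q E A hx hxA m, mul_add]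
  have h2 := gsum_mono hq0 hq1 (E.erase x) A m
  have hle : ((E.erase x).card - m : ℕ) + (m + 1) ≤ E.card := by
    rw [Finset.card_erase_of_mem hx]
    omega
  have hcast : (((E.erase x).card - m : ℕ) : ℝ) + ((m+1:ℕ):ℝ) ≤ (E.card : ℝ) := by
    exact_mod_cast hle
  have hg : 0 ≤ gsum q (E.erase x) A m := gsum_nonneg hq0 _ _ _
  have hg2 : 0 ≤ gsum q (E.erase x) A (m+1) := gsum_nonneg hq0 _ _ _
  nlinarith [h2, hg, hg2]

-- main bound, unnormalized
lemma gsum_le {q : ℝ} (hq0 : 0 ≤ q) (hq1 : q ≤ 1) (E : Finset α) {m : ℕ} (hm : m ≤ E.card) :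
    ∀ A : Finset α, A ⊆ E →
      gsum q E A m ≤ (E.card.choose m : ℝ) * (1 - (1 - q) * m / E.card) ^ A.card := by
  have hfact : 0 ≤ 1 - (1 - q) * m / E.card := by
    rcases Nat.eq_zero_or_pos E.card with h | h
    · have : m = 0 := by omega
      simp [this]
    · have hn0 : (0:ℝ) < E.card := by exact_mod_cast h
      have hm' : (m : ℝ) / E.card ≤ 1 := by
        rw [div_le_one hn0]; exact_mod_cast hm
      have h1q : 0 ≤ 1 - q := by linarith
      have hmn : 0 ≤ (m : ℝ) / E.card := by positivity
      have hprod : (1-q) * ((m:ℝ)/E.card) ≤ 1 := by nlinarith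
      rw [mul_div_assoc]
      linarith
  intro A
  induction A using Finset.strongInduction with
  | _ A ih =>
    intro hAE
    rcases Finset.eq_empty_or_nonempty A with rfl | ⟨x, hxA⟩
    · simp only [Finset.card_empty, pow_zero, mul_one, gsum]
      have : ∀ S ∈ E.powersetCard m, q ^ (S ∩ (∅:Finset α)).card = 1 := by
        intro S _; simp
      rw [Finset.sum_congr rfl this, Finset.sum_const, Finset.card_powersetCard, nsmul_eq_mul,
        mul_one]
    · have hxE : x ∈ E := hAE hxA
      have hn : 1 ≤ E.card := Finset.card_pos.2 ⟨x, hxE⟩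
      have hn0 : (0:ℝ) < E.card := by exact_mod_cast hn
      rcases m with _ | m'
      · -- m = 0
        simp only [gsum, Finset.powersetCard_zero, Finset.sum_singleton, Finset.empty_inter,
          Finset.card_empty, pow_zero, Nat.choose_zero_right, Nat.cast_one, one_mul,
          Nat.cast_zero, mul_zero, zero_div, sub_zero, one_pow, le_refl]
      · set A' := A.erase x with hA'
        have hA'sub : A' ⊂ A := Finset.erase_ssubset hxA
        have hA'E : A' ⊆ E := (Finset.erase_subset _ _).trans hAE
        have hxA' : x ∉ A' := Finset.notMem_erase _ _
        have hsub : gsum q E A (m'+1) = gsum q E A' (m'+1)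
            - (1 - q) * gsum q (E.erase x) A' m' := by
          rw [gsum_R2 q E A hxE hxA m', gsum_R1 q E A' hxE hxA' m']
          ring
        have hM' := gsum_M' hq0 hq1 E A' hxE hxA' hm
        have h1q : (0:ℝ) ≤ 1 - q := by linarith
        -- n * g E A (m'+1) ≤ (n - (1-q)(m'+1)) * g E A' (m'+1)
        have step : (E.card:ℝ) * gsum q E A (m'+1)
            ≤ ((E.card:ℝ) - (1-q) * ((m'+1:ℕ):ℝ)) * gsum q E A' (m'+1) := by
          rw [hsub]
          have h5 := mul_le_mul_of_nonneg_left hM' h1q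
          nlinarith [h5]
        have ihA' := ih A' hA'sub hA'E
        have hβ : ((E.card:ℝ) - (1-q) * ((m'+1:ℕ):ℝ))
            = (E.card:ℝ) * (1 - (1 - q) * ((m'+1:ℕ):ℝ) / E.card) := by
          field_simp
        have hfact' : (0:ℝ) ≤ 1 - (1 - q) * ((m'+1 : ℕ):ℝ) / E.card := by
          push_cast at hfact ⊢; exact hfact
        have hcardA : A.card = A'.card + 1 := by
          have hpos : 0 < A.card := Finset.card_pos.2 ⟨x, hxA⟩
          rw [hA', Finset.card_erase_of_mem hxA]
          omega
        have final : (E.card:ℝ) * gsum q E A (m'+1)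
            ≤ (E.card:ℝ) * ((E.card.choose (m'+1) : ℝ) * (1 - (1 - q) * ((m'+1:ℕ):ℝ) / E.card) ^ A.card) := by
          calc (E.card:ℝ) * gsum q E A (m'+1)
              ≤ ((E.card:ℝ) - (1-q) * ((m'+1:ℕ):ℝ)) * gsum q E A' (m'+1) := step
            _ = (E.card:ℝ) * ((1 - (1 - q) * ((m'+1:ℕ):ℝ) / E.card) * gsum q E A' (m'+1)) := by
                rw [hβ]; ring
            _ ≤ (E.card:ℝ) * ((1 - (1 - q) * ((m'+1:ℕ):ℝ) / E.card) *
                  ((E.card.choose (m'+1) : ℝ) * (1 - (1 - q) * ((m'+1:ℕ):ℝ) / E.card) ^ A'.card)) := by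
                apply mul_le_mul_of_nonneg_left _ (le_of_lt hn0)
                exact mul_le_mul_of_nonneg_left ihA' hfact'
            _ = (E.card:ℝ) * ((E.card.choose (m'+1) : ℝ) * (1 - (1 - q) * ((m'+1:ℕ):ℝ) / E.card) ^ A.card) := by
                rw [hcardA, pow_succ]; ring
        exact le_of_mul_le_mul_left final hn0
lemma one_sub_exp_ge {x : ℝ} (hx : 0 ≤ x) :
    (1 - (Real.exp 1)⁻¹) * min x 1 ≤ 1 - Real.exp (-x) := by
  have h2 : Real.exp (-1) = (Real.exp 1)⁻¹ := Real.exp_neg 1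
  rcases le_or_gt x 1 with h | h
  · rw [min_eq_left h]
    have hconv := convexOn_exp.2 (Set.mem_univ (0:ℝ)) (Set.mem_univ (-1:ℝ))
      (by linarith : (0:ℝ) ≤ 1 - x) hx (by ring)
    simp only [smul_eq_mul, mul_zero, mul_neg, mul_one, zero_add, Real.exp_zero] at hconv
    rw [h2] at hconv
    linarith
  · rw [min_eq_right (le_of_lt h)]
    have hle : Real.exp (-x) ≤ Real.exp (-1) := Real.exp_le_exp.2 (by linarith)
    rw [h2] at hle
    linarith

lemma pointwise_min {r : ℕ} (hr : 1 ≤ r) (c : ℕ) :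
    (r : ℝ) * (1 - (1 - 1/(r:ℝ)) ^ c) ≤ min (c : ℝ) (r : ℝ) := by
  have hr0 : (0:ℝ) < r := by exact_mod_cast hr
  have hq0 : (0:ℝ) ≤ 1 - 1/(r:ℝ) := by
    rw [sub_nonneg, div_le_one hr0]
    exact_mod_cast hr
  rcases le_or_gt (c:ℝ) (r:ℝ) with h | h
  · rw [min_eq_left h]
    have hbern : 1 + (c:ℝ) * (-(1/(r:ℝ))) ≤ (1 + (-(1/(r:ℝ)))) ^ c := by
      apply one_add_mul_le_pow
      have : 1/(r:ℝ) ≤ 1 := by rw [div_le_one hr0]; exact_mod_cast hr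
      linarith
    have hb : (1 - 1/(r:ℝ)) ^ c ≥ 1 - (c:ℝ)/(r:ℝ) := by
      have e1 : (1 + (-(1/(r:ℝ)))) = 1 - 1/(r:ℝ) := by ring
      rw [e1] at hbern
      calc 1 - (c:ℝ)/(r:ℝ) = 1 + (c:ℝ) * (-(1/(r:ℝ))) := by ring
        _ ≤ (1 - 1/(r:ℝ)) ^ c := hbern
    have h6 := mul_le_mul_of_nonneg_left hb.le (le_of_lt hr0)
    have h7 : (r:ℝ) * ((c:ℝ)/(r:ℝ)) = c := by field_simp
    nlinarith [h6, h7]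
  · rw [min_eq_right (le_of_lt h)]
    have : (0:ℝ) ≤ (1 - 1/(r:ℝ)) ^ c := pow_nonneg hq0 _
    nlinarith

lemma pow_le_exp' {x : ℝ} (hx1 : x ≤ 1) (a : ℕ) :
    (1 - x) ^ a ≤ Real.exp (-(a * x)) := by
  have h1 : (1 - x) ≤ Real.exp (-x) := by
    have := Real.add_one_le_exp (-x)
    linarith
  calc (1 - x) ^ a ≤ (Real.exp (-x)) ^ a := pow_le_pow_left₀ (by linarith) h1 a
    _ = Real.exp (-(a * x)) := by
        rw [← Real.exp_nat_mul]
        ring_nf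

lemma sum_min_ge (E A : Finset α) (hA : A ⊆ E) {m r : ℕ} (hm : m ≤ E.card) (hr : 1 ≤ r) :
    (1 - (Real.exp 1)⁻¹) * ((E.card.choose m : ℝ) *
        min ((m * A.card : ℝ) / E.card) (r : ℝ)) ≤
      ∑ S ∈ E.powersetCard m, min (((S ∩ A).card : ℝ)) (r : ℝ) := by
  have hr0 : (0:ℝ) < r := by exact_mod_cast hr
  have hee : (0:ℝ) < 1 - (Real.exp 1)⁻¹ := by
    rw [sub_pos]
    rw [inv_lt_one_iff₀]
    right
    nlinarith [Real.add_one_le_exp (1:ℝ)]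
  rcases Nat.eq_zero_or_pos E.card with hE0 | hEpos
  · have hm0 : m = 0 := by omega
    have hE : E = ∅ := Finset.card_eq_zero.1 hE0
    subst hE
    have hA0 : A = ∅ := Finset.subset_empty.1 hA
    subst hA0 hm0
    simp only [Finset.powersetCard_zero, Finset.sum_singleton, Finset.empty_inter,
      Finset.card_empty, Nat.cast_zero, Nat.choose_self, Nat.cast_one, Finset.card_empty]
    rw [mul_zero, zero_div, min_eq_left (le_of_lt hr0)]
    simp
  · have hn0 : (0:ℝ) < E.card := by exact_mod_cast hEpos
    set q : ℝ := 1 - 1/(r:ℝ) with hqdef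
    have hq0 : (0:ℝ) ≤ q := by
      rw [hqdef, sub_nonneg, div_le_one hr0]
      exact_mod_cast hr
    have hq1 : q ≤ 1 := by
      rw [hqdef]
      have : (0:ℝ) ≤ 1/(r:ℝ) := by positivity
      linarith
    have h1q : 1 - q = 1/(r:ℝ) := by rw [hqdef]; ring
    -- step 1 : pointwise
    have step1 : (r:ℝ) * ((E.card.choose m : ℝ) - gsum q E A m)
        ≤ ∑ S ∈ E.powersetCard m, min (((S ∩ A).card : ℝ)) (r : ℝ) := by
      have : ∀ S ∈ E.powersetCard m, (r:ℝ) * (1 - q ^ (S ∩ A).card)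
          ≤ min (((S ∩ A).card : ℝ)) (r : ℝ) := fun S _ => pointwise_min hr _
      calc (r:ℝ) * ((E.card.choose m : ℝ) - gsum q E A m)
          = ∑ S ∈ E.powersetCard m, (r:ℝ) * (1 - q ^ (S ∩ A).card) := by
            have e1 : ∑ S ∈ E.powersetCard m, (r:ℝ) * (1 - q ^ (S ∩ A).card)
                = ∑ S ∈ E.powersetCard m, ((r:ℝ) - (r:ℝ) * q ^ (S ∩ A).card) :=
              Finset.sum_congr rfl (fun S _ => by ring)
            rw [e1, Finset.sum_sub_distrib, Finset.sum_const, Finset.card_powersetCard,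
              nsmul_eq_mul, ← Finset.mul_sum, ← gsum]
            ring
        _ ≤ _ := Finset.sum_le_sum this
    -- step 2 : gsum bound + exp
    have hx1 : (m:ℝ) / ((r:ℝ) * E.card) ≤ 1 := by
      rw [div_le_one (by positivity)]
      have h1 : (m:ℝ) ≤ E.card := by exact_mod_cast hm
      have h2 : (1:ℝ) * (E.card:ℝ) ≤ (r:ℝ) * E.card :=
        mul_le_mul_of_nonneg_right (by exact_mod_cast hr) (le_of_lt hn0)
      linarith
    have hgs := gsum_le hq0 hq1 E hm A hA
    rw [h1q] at hgs
    have heq : 1 / (r:ℝ) * (m:ℝ) / (E.card:ℝ) = (m:ℝ) / ((r:ℝ) * E.card) := by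
      field_simp
    rw [heq] at hgs
    have hexp := pow_le_exp' hx1 A.card
    have hsx : 0 ≤ (A.card:ℝ) * ((m:ℝ) / ((r:ℝ) * E.card)) := by positivity
    have hone := one_sub_exp_ge hsx
    -- combine
    have hCpos : (0:ℝ) < (E.card.choose m : ℝ) := by exact_mod_cast Nat.choose_pos hm
    have key : (1 - (Real.exp 1)⁻¹) * min ((A.card:ℝ) * ((m:ℝ) / ((r:ℝ) * E.card))) 1
        ≤ 1 - gsum q E A m / (E.card.choose m : ℝ) := by
      have hgsC : gsum q E A m / (E.card.choose m : ℝ)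
          ≤ (1 - (m:ℝ) / ((r:ℝ) * E.card)) ^ A.card := by
        rw [div_le_iff₀ hCpos]
        calc gsum q E A m ≤ (E.card.choose m : ℝ) * (1 - (m:ℝ) / ((r:ℝ) * E.card)) ^ A.card := hgs
          _ = (1 - (m:ℝ) / ((r:ℝ) * E.card)) ^ A.card * (E.card.choose m : ℝ) := by ring
      calc (1 - (Real.exp 1)⁻¹) * min ((A.card:ℝ) * ((m:ℝ) / ((r:ℝ) * E.card))) 1
          ≤ 1 - Real.exp (-((A.card:ℝ) * ((m:ℝ) / ((r:ℝ) * E.card)))) := hone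
        _ ≤ 1 - (1 - (m:ℝ) / ((r:ℝ) * E.card)) ^ A.card := by linarith [hexp]
        _ ≤ 1 - gsum q E A m / (E.card.choose m : ℝ) := by linarith [hgsC]
    -- multiply key by r * C
    have hrC : (0:ℝ) ≤ (r:ℝ) * (E.card.choose m : ℝ) := by positivity
    have key2 := mul_le_mul_of_nonneg_left key hrC
    have hminid : (r:ℝ) * min ((A.card:ℝ) * ((m:ℝ) / ((r:ℝ) * E.card))) 1
        = min ((m * A.card : ℝ) / E.card) (r:ℝ) := by
      have hxr : (r:ℝ) * ((A.card:ℝ) * ((m:ℝ) / ((r:ℝ) * E.card))) = (m * A.card : ℝ) / E.card := by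
        field_simp
      rcases le_total ((A.card:ℝ) * ((m:ℝ) / ((r:ℝ) * E.card))) 1 with hc | hc
      · rw [min_eq_left hc, min_eq_left, hxr]
        rw [← hxr]
        nlinarith
      · rw [min_eq_right hc, min_eq_right, mul_one]
        rw [← hxr]
        nlinarith
    calc (1 - (Real.exp 1)⁻¹) * ((E.card.choose m : ℝ) * min ((m * A.card : ℝ) / E.card) (r : ℝ))
        = (r:ℝ) * (E.card.choose m : ℝ) *
            ((1 - (Real.exp 1)⁻¹) * min ((A.card:ℝ) * ((m:ℝ) / ((r:ℝ) * E.card))) 1) := by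
          rw [← hminid]; ring
      _ ≤ (r:ℝ) * (E.card.choose m : ℝ) * (1 - gsum q E A m / (E.card.choose m : ℝ)) := key2
      _ = (r:ℝ) * ((E.card.choose m : ℝ) - gsum q E A m) := by
          field_simp
      _ ≤ _ := step1
lemma filter_mem_powersetCard {E : Finset α} {x : α} (hx : x ∈ E) (m : ℕ) :
    ((E.powersetCard (m+1)).filter (fun S => x ∈ S))
      = ((E.erase x).powersetCard m).image (insert x) := by
  ext S
  simp only [Finset.mem_filter, Finset.mem_powersetCard, Finset.mem_image]
  constructor
  · rintro ⟨⟨hSE, hScard⟩, hxS⟩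
    refine ⟨S.erase x, ⟨fun y hy => ?_, ?_⟩, Finset.insert_erase hxS⟩
    · exact Finset.mem_erase.2 ⟨(Finset.mem_erase.1 hy).1, hSE (Finset.mem_erase.1 hy).2⟩
    · rw [Finset.card_erase_of_mem hxS, hScard]
      omega
  · rintro ⟨T, ⟨hTE, hTcard⟩, rfl⟩
    have hxT : x ∉ T := fun h => (Finset.notMem_erase x E) (hTE h)
    refine ⟨⟨Finset.insert_subset hx (hTE.trans (Finset.erase_subset _ _)), ?_⟩,
      Finset.mem_insert_self _ _⟩
    rw [Finset.card_insert_of_notMem hxT, hTcard]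

lemma count_mem_powersetCard {E : Finset α} {x : α} (hx : x ∈ E) (m : ℕ) :
    ((E.powersetCard (m+1)).filter (fun S => x ∈ S)).card = (E.card - 1).choose m := by
  rw [filter_mem_powersetCard hx m, Finset.card_image_of_injOn, Finset.card_powersetCard,
    Finset.card_erase_of_mem hx]
  intro S hS T hT hST
  have hxS : x ∉ S := fun h => (Finset.notMem_erase x E)
    ((Finset.mem_powersetCard.1 (Finset.mem_coe.1 hS)).1 h)
  have hxT : x ∉ T := fun h => (Finset.notMem_erase x E)
    ((Finset.mem_powersetCard.1 (Finset.mem_coe.1 hT)).1 h)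
  have := congrArg (Finset.erase · x) hST
  simpa [Finset.erase_insert, hxS, hxT] using this

lemma sum_inter_card {E A : Finset α} (hA : A ⊆ E) (m : ℕ) :
    ∑ S ∈ E.powersetCard (m+1), (S ∩ A).card = A.card * (E.card - 1).choose m := by
  have : ∀ S, (S ∩ A).card = ∑ x ∈ A, if x ∈ S then 1 else 0 := by
    intro S
    rw [← Finset.card_filter]
    congr 1
    ext y
    simp [Finset.mem_inter, and_comm]
  rw [Finset.sum_congr rfl (fun S _ => this S), Finset.sum_comm]
  have : ∀ x ∈ A, (∑ S ∈ E.powersetCard (m+1), if x ∈ S then 1 else 0)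
      = (E.card - 1).choose m := by
    intro x hxA
    rw [← Finset.card_filter]
    exact count_mem_powersetCard (hA hxA) m
  rw [Finset.sum_congr rfl this, Finset.sum_const, smul_eq_mul]
lemma FinMatroid.r_union_le (M : FinMatroid α) (X Y : Finset α) :
    M.r (X ∪ Y) ≤ M.r X + Y.card :=
  le_trans (le_trans (Nat.le_add_right _ _) (M.r_submod X Y))
    (add_le_add_right (M.r_le_card Y) _)

lemma FinMatroid.r_le_r_add_sdiff (M : FinMatroid α) (S B : Finset α) :
    M.r S ≤ M.r B + (S \ B).card := by
  have h1 : S = (S ∩ B) ∪ (S \ B) := by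
    ext y; simp only [Finset.mem_union, Finset.mem_inter, Finset.mem_sdiff]; tauto
  calc M.r S = M.r ((S ∩ B) ∪ (S \ B)) := by rw [← h1]
    _ ≤ M.r (S ∩ B) + (S \ B).card := M.r_union_le _ _
    _ ≤ M.r B + (S \ B).card := add_le_add_left (M.r_mono Finset.inter_subset_right) _

-- subsets of independent sets
lemma FinMatroid.indep_subset_card (M : FinMatroid α) {I J : Finset α}
    (hI : M.r I = I.card) (hJ : J ⊆ I) : M.r J = J.card := by
  have h1 : M.r I ≤ M.r J + (I \ J).card := M.r_le_r_add_sdiff I J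
  have h2 : (I \ J).card = I.card - J.card := Finset.card_sdiff_of_subset hJ
  have h3 : J.card ≤ I.card := Finset.card_le_card hJ
  have h4 := M.r_le_card J
  omega

lemma FinMatroid.inter_card_le_r (M : FinMatroid α) {I : Finset α}
    (hI : M.r I = I.card) (X : Finset α) : (I ∩ X).card ≤ M.r X := by
  have h1 : M.r (I ∩ X) = (I ∩ X).card :=
    M.indep_subset_card hI Finset.inter_subset_left
  rw [← h1]
  exact M.r_mono Finset.inter_subset_right

-- selection lemma
lemma exists_selection {n : ℕ} (P : Finset (Fin n)) (r : ℕ) :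
    ∃ T ⊆ P, ∀ m : ℕ,
      ((T.filter (fun jj : Fin n => (jj : ℕ) < m)).card
        = min ((P.filter (fun jj : Fin n => (jj : ℕ) < m)).card) r) := by
  induction P using Finset.strongInduction with
  | _ P ih =>
    rcases le_or_gt P.card r with hPr | hPr
    · refine ⟨P, Finset.Subset.refl P, fun m => ?_⟩
      rw [min_eq_left]
      exact le_trans (Finset.card_le_card (Finset.filter_subset _ _)) hPr
    · have hne : P.Nonempty := by
        rw [← Finset.card_pos]; omega
      obtain ⟨x, hxP, hxmax⟩ := P.exists_max_image (fun jj => (jj : ℕ)) hne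
      obtain ⟨T, hTsub, hT⟩ := ih (P.erase x) (Finset.erase_ssubset hxP)
      refine ⟨T, hTsub.trans (Finset.erase_subset _ _), fun m => ?_⟩
      rw [hT m]
      rcases lt_or_ge (x : ℕ) m with hxm | hxm
      · -- all of P below m
        have hPfull : P.filter (fun jj : Fin n => (jj : ℕ) < m) = P := by
          apply Finset.filter_true_of_mem
          intro y hy
          exact lt_of_le_of_lt (hxmax y hy) hxm
        have hPefull : (P.erase x).filter (fun jj : Fin n => (jj : ℕ) < m) = P.erase x := by
          apply Finset.filter_true_of_mem
          intro y hy
          exact lt_of_le_of_lt (hxmax y (Finset.mem_of_mem_erase hy)) hxm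
        rw [hPfull, hPefull, Finset.card_erase_of_mem hxP]
        omega
      · -- x not below m, filters agree
        congr 2
        ext y
        simp only [Finset.mem_filter, Finset.mem_erase]
        constructor
        · rintro ⟨⟨hyx, hyP⟩, hym⟩; exact ⟨hyP, hym⟩
        · rintro ⟨hyP, hym⟩
          refine ⟨⟨?_, hyP⟩, hym⟩
          rintro rfl
          omega
noncomputable def dfun (n : ℕ) (w : ℕ → ℝ) (t : ℕ) : ℝ :=
  (if t < n then w t else 0) - (if t + 1 < n then w (t+1) else 0)

lemma dfun_nonneg {n : ℕ} {w : ℕ → ℝ} (hw : ∀ i j, i ≤ j → j < n → w j ≤ w i)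
    (hw0 : ∀ j < n, 0 ≤ w j) (t : ℕ) : 0 ≤ dfun n w t := by
  unfold dfun
  by_cases h1 : t + 1 < n
  · have h2 : t < n := by omega
    simp only [if_pos h1, if_pos h2]
    have := hw t (t+1) (by omega) h1
    linarith
  · simp only [if_neg h1]
    by_cases h2 : t < n
    · simp only [if_pos h2]
      have := hw0 t h2
      linarith
    · simp [if_neg h2]

lemma dfun_telescope {n : ℕ} (w : ℕ → ℝ) {j : ℕ} (hj : j < n) :
    ∑ t ∈ Finset.Ico j n, dfun n w t = w j := by
  have h := Finset.sum_Ico_eq_sub (f := dfun n w) (le_of_lt hj)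
  rw [h]
  have tele : ∀ N, ∑ t ∈ Finset.range N, dfun n w t
      = (if 0 < n then w 0 else 0) - (if N < n then w N else 0) := by
    intro N
    have := Finset.sum_range_sub' (f := fun t => if t < n then w t else 0) N
    simpa [dfun] using this
  rw [tele n, tele j]
  simp [hj, lt_irrefl]

lemma abel_sum {n : ℕ} (w : ℕ → ℝ) (A : Finset (Fin n)) :
    ∑ jj ∈ A, w (jj : ℕ)
      = ∑ t ∈ Finset.range n, dfun n w t *
          ((A.filter (fun jj : Fin n => (jj : ℕ) < t + 1)).card : ℝ) := by
  have step1 : ∀ jj : Fin n, w (jj : ℕ) = ∑ t ∈ Finset.Ico (jj : ℕ) n, dfun n w t :=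
    fun jj => (dfun_telescope w jj.2).symm
  rw [Finset.sum_congr rfl (fun jj _ => step1 jj)]
  have step2 : ∀ jj : Fin n, ∑ t ∈ Finset.Ico (jj : ℕ) n, dfun n w t
      = ∑ t ∈ Finset.range n, if (jj : ℕ) ≤ t then dfun n w t else 0 := by
    intro jj
    rw [← Finset.sum_filter]
    congr 1
    ext t
    simp [Finset.mem_Ico, Finset.mem_filter, and_comm]
  rw [Finset.sum_congr rfl (fun jj _ => step2 jj), Finset.sum_comm]
  apply Finset.sum_congr rfl
  intro t _
  rw [Finset.sum_ite, Finset.sum_const_zero, add_zero, Finset.sum_const, nsmul_eq_mul, mul_comm]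
  have heq : A.filter (fun jj : Fin n => (jj : ℕ) ≤ t)
      = A.filter (fun jj : Fin n => (jj : ℕ) < t + 1) := by
    apply Finset.filter_congr
    intro jj _
    simp [Nat.lt_succ_iff]
  rw [heq]

lemma pos_card {n : ℕ} (v : Fin n → α) (hv : Function.Injective v) (I : Finset α) (m : ℕ) :
    ((Finset.univ.filter (fun jj : Fin n => v jj ∈ I)).filter
        (fun jj : Fin n => (jj : ℕ) < m)).card
      = (I ∩ (Finset.univ.filter (fun jj : Fin n => (jj : ℕ) < m)).image v).card := by
  rw [← Finset.card_image_of_injective _ hv]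
  congr 1
  ext x
  simp only [Finset.mem_image, Finset.mem_filter, Finset.mem_univ, true_and, Finset.mem_inter]
  constructor
  · rintro ⟨jj, ⟨hI, hm⟩, rfl⟩
    exact ⟨hI, ⟨jj, hm, rfl⟩⟩
  · rintro ⟨hI, jj, hm, rfl⟩
    exact ⟨jj, ⟨hI, hm⟩, rfl⟩

lemma exists_perm {β : Type*} [Fintype β] [DecidableEq β] (C D : Finset β)
    (h : C.card = D.card) : ∃ π : Equiv.Perm β, ∀ x, x ∈ C ↔ π x ∈ D := by
  have hcompl : (Finset.univ \ C).card = (Finset.univ \ D).card := by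
    rw [Finset.card_sdiff_of_subset (Finset.subset_univ _), Finset.card_sdiff_of_subset (Finset.subset_univ _), h]
  let e1 : {x // x ∈ C} ≃ {x // x ∈ D} := Finset.equivOfCardEq h
  let e2' : {x // x ∈ Finset.univ \ C} ≃ {x // x ∈ Finset.univ \ D} :=
    Finset.equivOfCardEq hcompl
  let iso1 : {x // x ∉ C} ≃ {x // x ∈ Finset.univ \ C} :=
    Equiv.subtypeEquivRight (fun x => by simp)
  let iso2 : {x // x ∈ Finset.univ \ D} ≃ {x // x ∉ D} :=
    Equiv.subtypeEquivRight (fun x => by simp)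
  let e2 : {x // x ∉ C} ≃ {x // x ∉ D} := (iso1.trans e2').trans iso2
  let π : Equiv.Perm β := Equiv.subtypeCongr e1 e2
  refine ⟨π, fun x => ?_⟩
  by_cases hx : x ∈ C
  · have hπ : π x = (e1 ⟨x, hx⟩ : β) := by
      simp only [π, Equiv.subtypeCongr, Equiv.trans_apply,
        Equiv.sumCompl_symm_apply_of_pos hx, Equiv.sumCongr_apply, Sum.map_inl,
        Equiv.sumCompl_apply_inl]
    rw [hπ]
    exact ⟨fun _ => (e1 ⟨x, hx⟩).2, fun _ => hx⟩
  · have hπ : π x = (e2 ⟨x, hx⟩ : β) := by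
      simp only [π, Equiv.subtypeCongr, Equiv.trans_apply,
        Equiv.sumCompl_symm_apply_of_neg hx, Equiv.sumCongr_apply, Sum.map_inr,
        Equiv.sumCompl_apply_inr]
    rw [hπ]
    exact ⟨fun h' => absurd h' hx, fun h' => absurd h' (e2 ⟨x, hx⟩).2⟩
def Sm {n : ℕ} (E : Finset α) (σ : Fin n → {a // a ∈ E}) (m : ℕ) : Finset α :=
  (Finset.univ.filter (fun jj : Fin n => (jj : ℕ) < m)).image (fun jj => (σ jj : α))

lemma card_filter_lt {n m : ℕ} (hm : m ≤ n) :
    (Finset.univ.filter (fun jj : Fin n => (jj : ℕ) < m)).card = m := by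
  rw [show (Finset.univ.filter (fun jj : Fin n => (jj : ℕ) < m))
      = Finset.univ.image (Fin.castLE hm) from ?_, Finset.card_image_of_injective _
      (Fin.castLE_injective hm), Finset.card_univ, Fintype.card_fin]
  ext jj
  simp only [Finset.mem_filter, Finset.mem_univ, true_and, Finset.mem_image]
  constructor
  · intro h
    exact ⟨⟨(jj : ℕ), h⟩, by simp [Fin.ext_iff]⟩
  · rintro ⟨i, rfl⟩
    exact lt_of_lt_of_le i.2 (le_refl m)

lemma val_comp_injective {n : ℕ} {E : Finset α} {σ : Fin n → {a // a ∈ E}}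
    (hσ : Function.Injective σ) : Function.Injective (fun jj => (σ jj : α)) :=
  fun a b hab => hσ (Subtype.val_injective hab)

lemma Sm_mem {n : ℕ} {E : Finset α} (hn : E.card = n) {σ : Fin n → {a // a ∈ E}}
    (hσ : Function.Injective σ) {m : ℕ} (hm : m ≤ n) :
    Sm E σ m ∈ E.powersetCard m := by
  rw [Finset.mem_powersetCard]
  constructor
  · intro x hx
    obtain ⟨jj, _, rfl⟩ := Finset.mem_image.1 hx
    exact (σ jj).2
  · rw [Sm, Finset.card_image_of_injective _ (val_comp_injective hσ), card_filter_lt hm]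

lemma Sm_perm {n : ℕ} {E : Finset α} (hn : E.card = n) {σ : Fin n → {a // a ∈ E}}
    (hσ : Function.Bijective σ) {m : ℕ} (hm : m ≤ n) {S S' : Finset α}
    (hS : S ∈ E.powersetCard m) (hS' : S' ∈ E.powersetCard m)
    (π : Equiv.Perm {a // a ∈ E}) (hπ : ∀ x : {a // a ∈ E}, (x : α) ∈ S ↔ (π x : α) ∈ S')
    (hSm : Sm E σ m = S) : Sm E (π ∘ σ) m = S' := by
  have hsub : Sm E (π ∘ σ) m ⊆ S' := by
    intro x hx
    obtain ⟨jj, hjj, rfl⟩ := Finset.mem_image.1 hx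
    have h1 : ((σ jj : α)) ∈ S := by
      rw [← hSm]
      exact Finset.mem_image_of_mem _ hjj
    exact (hπ (σ jj)).1 h1
  apply Finset.eq_of_subset_of_card_le hsub
  have h2 : (Sm E (π ∘ σ) m).card = m := by
    rw [Sm, Finset.card_image_of_injective _ (val_comp_injective (π.injective.comp hσ.injective)),
      card_filter_lt hm]
  rw [h2, (Finset.mem_powersetCard.1 hS').2]

lemma orbit_reduce {n : ℕ} (E : Finset α) (hn : E.card = n) {m : ℕ} (hm : m ≤ n) :
    ∃ c : ℝ, 0 ≤ c ∧ ∀ G : Finset α → ℝ,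
      ∑ σ ∈ Finset.univ.filter (fun σ : Fin n → {a // a ∈ E} => Function.Bijective σ),
          G (Sm E σ m)
        = c * ∑ S ∈ E.powersetCard m, G S := by
  classical
  have hPne : (E.powersetCard m).Nonempty := Finset.powersetCard_nonempty.2 (hn ▸ hm)
  obtain ⟨S₀, hS₀⟩ := hPne
  set Bij := Finset.univ.filter (fun σ : Fin n → {a // a ∈ E} => Function.Bijective σ) with hBij
  have fiber_const : ∀ S ∈ E.powersetCard m,
      ((Bij.filter (fun σ => Sm E σ m = S)).card : ℝ)
        = ((Bij.filter (fun σ => Sm E σ m = S₀)).card : ℝ) := by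
    intro S hS
    congr 1
    -- build a permutation carrying S to S₀
    have hcardCD : (Finset.univ.filter (fun x : {a // a ∈ E} => (x : α) ∈ S)).card
        = (Finset.univ.filter (fun x : {a // a ∈ E} => (x : α) ∈ S₀)).card := by
      have h1 : ∀ (X : Finset α), X ∈ E.powersetCard m →
          (Finset.univ.filter (fun x : {a // a ∈ E} => (x : α) ∈ X)).card = m := by
        intro X hX
        obtain ⟨hXE, hXcard⟩ := Finset.mem_powersetCard.1 hX
        rw [← hXcard]
        apply Finset.card_bij (fun (x : {a // a ∈ E}) _ => (x : α))
        · intro x hx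
          exact (Finset.mem_filter.1 hx).2
        · intro a ha b hb hab
          exact Subtype.val_injective hab
        · intro y hy
          exact ⟨⟨y, hXE hy⟩, Finset.mem_filter.2 ⟨Finset.mem_univ _, hy⟩, rfl⟩
      rw [h1 S hS, h1 S₀ hS₀]
    obtain ⟨π, hπ⟩ := exists_perm _ _ hcardCD
    have hπ' : ∀ x : {a // a ∈ E}, (x : α) ∈ S ↔ (π x : α) ∈ S₀ := by
      intro x
      have := hπ x
      simpa using this
    have hπ'' : ∀ x : {a // a ∈ E}, (x : α) ∈ S₀ ↔ (π.symm x : α) ∈ S := by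
      intro x
      have := hπ' (π.symm x)
      simpa using this.symm
    apply Finset.card_bij' (fun σ _ => π ∘ σ) (fun τ _ => π.symm ∘ τ)
    · intro σ hσ
      obtain ⟨hσB, hσS⟩ := Finset.mem_filter.1 hσ
      have hbij : Function.Bijective σ := by
        simpa [hBij] using hσB
      refine Finset.mem_filter.2 ⟨?_, ?_⟩
      · simp only [hBij, Finset.mem_filter, Finset.mem_univ, true_and]
        exact π.bijective.comp hbij
      · exact Sm_perm hn hbij hm hS hS₀ π hπ' hσS
    · intro τ hτ
      obtain ⟨hτB, hτS⟩ := Finset.mem_filter.1 hτ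
      have hbij : Function.Bijective τ := by
        simpa [hBij] using hτB
      refine Finset.mem_filter.2 ⟨?_, ?_⟩
      · simp only [hBij, Finset.mem_filter, Finset.mem_univ, true_and]
        exact π.symm.bijective.comp hbij
      · exact Sm_perm hn hbij hm hS₀ hS π.symm hπ'' hτS
    · intro σ _
      funext jj
      simp
    · intro τ _
      funext jj
      simp
  refine ⟨((Bij.filter (fun σ => Sm E σ m = S₀)).card : ℝ), Nat.cast_nonneg _, fun G => ?_⟩
  have hmaps : ∀ σ ∈ Bij, Sm E σ m ∈ E.powersetCard m := by
    intro σ hσ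
    have hbij : Function.Bijective σ := by simpa [hBij] using hσ
    exact Sm_mem hn hbij.injective hm
  rw [← Finset.sum_fiberwise_of_maps_to hmaps (fun σ => G (Sm E σ m))]
  rw [Finset.mul_sum]
  apply Finset.sum_congr rfl
  intro S hS
  have : ∀ σ ∈ Bij.filter (fun σ => Sm E σ m = S), G (Sm E σ m) = G S := by
    intro σ hσ
    rw [(Finset.mem_filter.1 hσ).2]
  rw [Finset.sum_congr rfl this, Finset.sum_const, nsmul_eq_mul, fiber_const S hS]
lemma exists_threshold (k : ℕ) (P : ℕ → Prop) [DecidablePred P]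
    (hanti : ∀ j j', j ≤ j' → j' < k → P j' → P j) :
    ∃ i, i ≤ k ∧ (∀ j < k, j < i → P j) ∧ (∀ j < k, i ≤ j → ¬ P j) := by
  set s := (Finset.range k).filter P with hs
  rcases Finset.eq_empty_or_nonempty s with he | hne
  · refine ⟨0, Nat.zero_le _, fun j _ hj => absurd hj (Nat.not_lt_zero j), fun j hj _ hP => ?_⟩
    have : j ∈ s := Finset.mem_filter.2 ⟨Finset.mem_range.2 hj, hP⟩
    rw [he] at this
    exact absurd this (Finset.notMem_empty j)
  · set i0 := s.max' hne with hi0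
    have hi0s : i0 ∈ s := s.max'_mem hne
    have hi0k : i0 < k := Finset.mem_range.1 (Finset.mem_filter.1 hi0s).1
    have hPi0 : P i0 := (Finset.mem_filter.1 hi0s).2
    refine ⟨i0 + 1, hi0k, fun j hj hji => ?_, fun j hj hij hP => ?_⟩
    · exact hanti j i0 (by omega) hi0k hPi0
    · have : j ∈ s := Finset.mem_filter.2 ⟨Finset.mem_range.2 hj, hP⟩
      have := s.le_max' j this
      omega

section chain
variable {M : FinMatroid α} {k : ℕ} {F : ℕ → Finset α}

lemma F_mono (hchain : ∀ i < k, F i ⊂ F (i + 1)) :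
    ∀ i j, i ≤ j → j ≤ k → F i ⊆ F j := by
  intro i j hij hjk
  induction j with
  | zero => rw [Nat.le_zero.1 hij]
  | succ j' ih =>
    rcases Nat.lt_or_ge i (j' + 1) with h | h
    · exact (ih (by omega) (by omega)).trans (le_of_lt (hchain j' (by omega))).subset
    · rw [Nat.le_antisymm hij h]

lemma r_F_eq_sum (hF0 : F 0 = ∅) (hri : ∀ i < k, M.r (F i) < M.r (F (i + 1))) :
    ∀ i, i ≤ k → M.r (F i) = ∑ j ∈ Finset.range i, (M.r (F (j+1)) - M.r (F j)) := by
  intro i hik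
  induction i with
  | zero => simp [hF0, M.r_empty]
  | succ i' ih =>
    rw [Finset.sum_range_succ, ← ih (by omega)]
    have := hri i' (by omega)
    omega

lemma sdiff_card_decomp (hchain : ∀ i < k, F i ⊂ F (i + 1)) {S : Finset α} (hS : S ⊆ F k) :
    ∀ d i, i + d = k →
      (S \ F i).card = ∑ j ∈ Finset.Ico i k, (S ∩ (F (j+1) \ F j)).card := by
  intro d
  induction d with
  | zero =>
    intro i hi
    rw [← hi]
    simp only [Nat.add_zero]
    rw [Finset.Ico_self, Finset.sum_empty, Finset.card_eq_zero, Finset.sdiff_eq_empty_iff_subset]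
    rw [← hi] at hS
    exact hS
  | succ d' ih =>
    intro i hi
    have hik : i < k := by omega
    have hdecomp : S \ F i = (S ∩ (F (i+1) \ F i)) ∪ (S \ F (i+1)) := by
      ext y
      simp only [Finset.mem_sdiff, Finset.mem_union, Finset.mem_inter]
      constructor
      · rintro ⟨hyS, hyF⟩
        by_cases hy1 : y ∈ F (i+1)
        · exact Or.inl ⟨hyS, hy1, hyF⟩
        · exact Or.inr ⟨hyS, hy1⟩
      · rintro (⟨hyS, _, hyF⟩ | ⟨hyS, hy1⟩)
        · exact ⟨hyS, hyF⟩
        · exact ⟨hyS, fun hyF => hy1 ((le_of_lt (hchain i hik)).subset hyF)⟩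
    have hdisj : Disjoint (S ∩ (F (i+1) \ F i)) (S \ F (i+1)) := by
      rw [Finset.disjoint_left]
      intro y hy1 hy2
      exact (Finset.mem_sdiff.1 hy2).2 (Finset.mem_sdiff.1 (Finset.mem_inter.1 hy1).2).1
    rw [hdecomp, Finset.card_union_of_disjoint hdisj, ih (i+1) (by omega),
      Finset.sum_eq_sum_Ico_succ_bot hik]

lemma r_S_bound (hchain : ∀ i < k, F i ⊂ F (i + 1)) (hF0 : F 0 = ∅)
    (hri : ∀ i < k, M.r (F i) < M.r (F (i + 1))) {S : Finset α} (hS : S ⊆ F k)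
    {i : ℕ} (hik : i ≤ k) :
    M.r S ≤ ∑ j ∈ Finset.range i, (M.r (F (j+1)) - M.r (F j))
      + ∑ j ∈ Finset.Ico i k, (S ∩ (F (j+1) \ F j)).card := by
  calc M.r S ≤ M.r (F i) + (S \ F i).card := M.r_le_r_add_sdiff S (F i)
    _ = _ := by
      rw [r_F_eq_sum hF0 hri i hik, sdiff_card_decomp hchain hS (k - i) i (by omega)]

end chain
lemma core_ineq (M : FinMatroid α) {n k : ℕ} (hcard : M.E.card = n)
    (F : ℕ → Finset α) (hF0 : F 0 = ∅) (hFk : F k = M.E)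
    (hchain : ∀ i < k, F i ⊂ F (i + 1))
    (hri : ∀ i < k, M.r (F i) < M.r (F (i + 1)))
    (lam : ℕ → ℝ)
    (hlam : ∀ i < k, lam (i + 1) =
      ((F (i + 1) \ F i).card : ℝ) / ((M.r (F (i + 1)) : ℝ) - (M.r (F i) : ℝ)))
    (hdec : ∀ i, 1 ≤ i → i < k → lam (i + 1) < lam i)
    {m' : ℕ} (hmn : m' + 1 ≤ n) :
    (1 - (Real.exp 1)⁻¹) * ∑ S ∈ M.E.powersetCard (m'+1), (M.r S : ℝ)
      ≤ ∑ S ∈ M.E.powersetCard (m'+1), ∑ j ∈ Finset.range k,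
          min (((S ∩ (F (j+1) \ F j)).card : ℝ)) (((M.r (F (j+1)) - M.r (F j) : ℕ)) : ℝ) := by
  classical
  have hee : (0:ℝ) ≤ 1 - (Real.exp 1)⁻¹ := by
    rw [sub_nonneg]
    rw [inv_le_one_iff₀]
    right
    nlinarith [Real.add_one_le_exp (1:ℝ)]
  have hn1 : 1 ≤ n := by omega
  have hn0 : (0:ℝ) < n := by exact_mod_cast hn1
  set rr : ℕ → ℕ := fun j => M.r (F (j+1)) - M.r (F j) with hrr
  set cj : ℕ → ℕ := fun j => (F (j+1) \ F j).card with hcj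
  have hrrpos : ∀ j < k, 1 ≤ rr j := fun j hj => by
    have := hri j hj
    simp only [hrr]
    omega
  have hrrcast : ∀ j < k, ((rr j : ℕ) : ℝ) = (M.r (F (j+1)) : ℝ) - (M.r (F j) : ℝ) := by
    intro j hj
    simp only [hrr]
    have := hri j hj
    push_cast [Nat.cast_sub (le_of_lt this)]
    ring
  have hlamval : ∀ j < k, lam (j+1) = (cj j : ℝ) / (rr j : ℝ) := by
    intro j hj
    rw [hlam j hj, hrrcast j hj]
  have hlam_anti : ∀ a b, 1 ≤ a → a ≤ b → b ≤ k → lam b ≤ lam a := by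
    intro a b ha hab
    induction b, hab using Nat.le_induction with
    | base => exact fun _ => le_rfl
    | succ b' hab' ih =>
      intro hbk
      have h1 : lam (b'+1) < lam b' := hdec b' (by omega) (by omega)
      have h2 := ih (by omega)
      linarith
  set P : ℕ → Prop := fun j => (n:ℝ) * rr j ≤ (m'+1 : ℝ) * cj j with hP
  have hanti : ∀ j j', j ≤ j' → j' < k → P j' → P j := by
    intro j j' hjj hj'k hPj'
    have hjk : j < k := by omega
    have hrj : (0:ℝ) < rr j := by exact_mod_cast hrrpos j hjk
    have hrj' : (0:ℝ) < rr j' := by exact_mod_cast hrrpos j' hj'k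
    have hlamle : lam (j'+1) ≤ lam (j+1) := hlam_anti (j+1) (j'+1) (by omega) (by omega) (by omega)
    rw [hlamval j' hj'k, hlamval j hjk] at hlamle
    rw [div_le_div_iff₀ hrj' hrj] at hlamle
    simp only [hP] at hPj' ⊢
    nlinarith [hPj', hlamle, hrj, hrj']
  obtain ⟨istar, histark, hbelow, habove⟩ := exists_threshold k P hanti
  have hEj_sub : ∀ j < k, F (j+1) \ F j ⊆ M.E := by
    intro j hj
    rw [← hFk]
    exact (Finset.sdiff_subset).trans (F_mono hchain (j+1) k (by omega) (le_refl k))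
  set C : ℝ := ((M.E.card.choose (m'+1) : ℕ) : ℝ) with hC
  have hmE : m' + 1 ≤ M.E.card := by omega
  have hCpos : (0:ℝ) < C := by
    rw [hC]
    exact_mod_cast Nat.choose_pos hmE
  -- LHS bound
  have hLHS : ∑ S ∈ M.E.powersetCard (m'+1), (M.r S : ℝ)
      ≤ C * ((∑ j ∈ Finset.range istar, rr j : ℕ) : ℝ)
        + ∑ j ∈ Finset.Ico istar k,
            ((∑ S ∈ M.E.powersetCard (m'+1), (S ∩ (F (j+1) \ F j)).card : ℕ) : ℝ) := by
    have hptw : ∀ S ∈ M.E.powersetCard (m'+1), (M.r S : ℝ)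
        ≤ ((∑ j ∈ Finset.range istar, rr j : ℕ) : ℝ)
          + ∑ j ∈ Finset.Ico istar k, ((S ∩ (F (j+1) \ F j)).card : ℝ) := by
      intro S hS
      have hSE : S ⊆ F k := by
        rw [hFk]
        exact (Finset.mem_powersetCard.1 hS).1
      have hb := r_S_bound (M := M) hchain hF0 hri hSE histark
      calc (M.r S : ℝ) ≤ ((∑ j ∈ Finset.range istar, rr j
            + ∑ j ∈ Finset.Ico istar k, (S ∩ (F (j+1) \ F j)).card : ℕ) : ℝ) := by
            exact_mod_cast hb
        _ = _ := by push_cast; ring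
    calc ∑ S ∈ M.E.powersetCard (m'+1), (M.r S : ℝ)
        ≤ ∑ S ∈ M.E.powersetCard (m'+1), (((∑ j ∈ Finset.range istar, rr j : ℕ) : ℝ)
            + ∑ j ∈ Finset.Ico istar k, ((S ∩ (F (j+1) \ F j)).card : ℝ)) :=
          Finset.sum_le_sum hptw
      _ = C * ((∑ j ∈ Finset.range istar, rr j : ℕ) : ℝ)
          + ∑ S ∈ M.E.powersetCard (m'+1), ∑ j ∈ Finset.Ico istar k,
              ((S ∩ (F (j+1) \ F j)).card : ℝ) := by
          rw [Finset.sum_add_distrib, Finset.sum_const, Finset.card_powersetCard, nsmul_eq_mul]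
      _ = _ := by
          rw [Finset.sum_comm]
          congr 1
          apply Finset.sum_congr rfl
          intro j _
          push_cast
          rfl
  -- RHS bound
  have hRHS : (1 - (Real.exp 1)⁻¹) * (C * ((∑ j ∈ Finset.range istar, rr j : ℕ) : ℝ)
          + ∑ j ∈ Finset.Ico istar k,
              ((∑ S ∈ M.E.powersetCard (m'+1), (S ∩ (F (j+1) \ F j)).card : ℕ) : ℝ))
      ≤ ∑ S ∈ M.E.powersetCard (m'+1), ∑ j ∈ Finset.range k,
          min (((S ∩ (F (j+1) \ F j)).card : ℝ)) ((rr j : ℕ) : ℝ) := by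
    rw [Finset.sum_comm]
    have hsplit : Finset.range k = Finset.Ico 0 istar ∪ Finset.Ico istar k := by
      rw [Finset.range_eq_Ico, ← Finset.Ico_union_Ico_eq_Ico (Nat.zero_le istar) histark]
    rw [hsplit, Finset.sum_union (Finset.Ico_disjoint_Ico_consecutive 0 istar k)]
    have hbound1 : ∀ j ∈ Finset.Ico 0 istar,
        (1 - (Real.exp 1)⁻¹) * (C * ((rr j : ℕ) : ℝ))
          ≤ ∑ S ∈ M.E.powersetCard (m'+1),
              min (((S ∩ (F (j+1) \ F j)).card : ℝ)) ((rr j : ℕ) : ℝ) := by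
      intro j hj
      have hjlt : j < istar := (Finset.mem_Ico.1 hj).2
      have hjk : j < k := by omega
      have hPj : P j := hbelow j hjk hjlt
      have hsm := sum_min_ge M.E (F (j+1) \ F j) (hEj_sub j hjk) hmE (hrrpos j hjk)
      have hminj : min (((m'+1 : ℕ) : ℝ) * ((F (j+1) \ F j).card : ℝ) / ((M.E.card : ℕ) : ℝ))
          ((rr j : ℕ) : ℝ) = ((rr j : ℕ) : ℝ) := by
        apply min_eq_right
        rw [le_div_iff₀ (by rw [hcard]; exact hn0)]
        simp only [hP] at hPj
        rw [hcard]
        have hcjeq : ((F (j+1) \ F j).card : ℝ) = (cj j : ℝ) := rfl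
        rw [hcjeq]
        push_cast
        push_cast at hPj
        nlinarith [hPj]
      rw [show ((m'+1 : ℕ) * (F (j+1) \ F j).card : ℝ) / (M.E.card : ℝ)
          = ((m'+1 : ℕ) : ℝ) * ((F (j+1) \ F j).card : ℝ) / ((M.E.card : ℕ) : ℝ) from by
            push_cast; ring, hminj] at hsm
      exact hsm
    have hbound2 : ∀ j ∈ Finset.Ico istar k,
        (1 - (Real.exp 1)⁻¹) *
            ((∑ S ∈ M.E.powersetCard (m'+1), (S ∩ (F (j+1) \ F j)).card : ℕ) : ℝ)
          ≤ ∑ S ∈ M.E.powersetCard (m'+1),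
              min (((S ∩ (F (j+1) \ F j)).card : ℝ)) ((rr j : ℕ) : ℝ) := by
      intro j hj
      have hjk : j < k := (Finset.mem_Ico.1 hj).2
      have hPj : ¬ P j := habove j hjk (Finset.mem_Ico.1 hj).1
      have hsm := sum_min_ge M.E (F (j+1) \ F j) (hEj_sub j hjk) hmE (hrrpos j hjk)
      have hminj : min (((m'+1 : ℕ) : ℝ) * ((F (j+1) \ F j).card : ℝ) / ((M.E.card : ℕ) : ℝ))
          ((rr j : ℕ) : ℝ)
          = ((m'+1 : ℕ) : ℝ) * ((F (j+1) \ F j).card : ℝ) / ((M.E.card : ℕ) : ℝ) := by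
        apply min_eq_left
        rw [div_le_iff₀ (by rw [hcard]; exact hn0)]
        simp only [hP, not_le] at hPj
        rw [hcard]
        have hcjeq : ((F (j+1) \ F j).card : ℝ) = (cj j : ℝ) := rfl
        rw [hcjeq]
        push_cast
        push_cast at hPj
        nlinarith [hPj]
      rw [show ((m'+1 : ℕ) * (F (j+1) \ F j).card : ℝ) / (M.E.card : ℝ)
          = ((m'+1 : ℕ) : ℝ) * ((F (j+1) \ F j).card : ℝ) / ((M.E.card : ℕ) : ℝ) from by
            push_cast; ring, hminj] at hsm
      -- identify C * ((m'+1) cj / n) with the card sum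
      have hsum := sum_inter_card (hEj_sub j hjk) m'
      have hchooseid := choose_id n m' hn1
      have hkey : C * (((m'+1 : ℕ) : ℝ) * ((F (j+1) \ F j).card : ℝ) / ((M.E.card : ℕ) : ℝ))
          = ((∑ S ∈ M.E.powersetCard (m'+1), (S ∩ (F (j+1) \ F j)).card : ℕ) : ℝ) := by
        rw [hsum, hC, hcard]
        have hc2 : ((n.choose (m'+1)) * (m'+1) : ℝ) = ((n * ((n-1).choose m') : ℕ) : ℝ) := by
          exact_mod_cast congrArg (Nat.cast (R := ℝ)) hchooseid.symm
        push_cast at hc2 ⊢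
        have hninv : (n:ℝ) * (n:ℝ)⁻¹ = 1 := mul_inv_cancel₀ (ne_of_gt hn0)
        linear_combination (((F (j + 1) \ F j).card : ℝ) / (n : ℝ)) * hc2
          + (((F (j + 1) \ F j).card : ℝ) * (((n-1).choose m' : ℕ) : ℝ)) * hninv
      rw [← hkey]
      exact hsm
    have e1 : ((∑ j ∈ Finset.range istar, rr j : ℕ) : ℝ)
        = ∑ j ∈ Finset.Ico 0 istar, ((rr j : ℕ) : ℝ) := by
      rw [← Finset.range_eq_Ico]
      push_cast
      rfl
    calc (1 - (Real.exp 1)⁻¹) * (C * ((∑ j ∈ Finset.range istar, rr j : ℕ) : ℝ)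
          + ∑ j ∈ Finset.Ico istar k,
              ((∑ S ∈ M.E.powersetCard (m'+1), (S ∩ (F (j+1) \ F j)).card : ℕ) : ℝ))
        = ∑ j ∈ Finset.Ico 0 istar, (1 - (Real.exp 1)⁻¹) * (C * ((rr j : ℕ) : ℝ))
          + ∑ j ∈ Finset.Ico istar k, (1 - (Real.exp 1)⁻¹) *
              ((∑ S ∈ M.E.powersetCard (m'+1), (S ∩ (F (j+1) \ F j)).card : ℕ) : ℝ) := by
          rw [mul_add, e1]
          simp only [Finset.mul_sum]
      _ ≤ _ := add_le_add (Finset.sum_le_sum hbound1) (Finset.sum_le_sum hbound2)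
  have := mul_le_mul_of_nonneg_left hLHS hee
  linarith [hRHS, this]
end Aux

/-- Setup as for the principal sequence: a chain `∅ = F_0 ⊊ ⋯ ⊊ F_k = E` with
`E_i = F_i \ F_{i−1}`, `r_i = r(F_i) − r(F_{i−1}) ≥ 1` and strictly decreasing
densities `λ_i ≥ 1`, plus weights `w 0 ≥ ⋯ ≥ w (n−1) ≥ 0`. Averaging over all
bijections `σ : {0,…,n−1} → E` (element `σ j` gets weight `w j`), the maximum
weight of a set `I` with `|I ∩ E_i| ≤ r_i` for all `i` is at least `(1 − 1/e)`
times the maximum weight of an independent set of `M`. The maxima are given by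
choice functions `OPTP`, `OPTM` assumed optimal for each bijection. -/
theorem stmt9 {α : Type*} [DecidableEq α] (M : FinMatroid α) (hloop : M.Loopless)
    (n : ℕ) (hn : 1 ≤ n) (hcard : M.E.card = n)
    (k : ℕ) (hk : 1 ≤ k) (F : ℕ → Finset α)
    (hF0 : F 0 = ∅) (hFk : F k = M.E)
    (hchain : ∀ i < k, F i ⊂ F (i + 1))
    (hri : ∀ i < k, M.r (F i) < M.r (F (i + 1)))
    (lam : ℕ → ℝ)
    (hlam : ∀ i < k, lam (i + 1) =
      ((F (i + 1) \ F i).card : ℝ) / ((M.r (F (i + 1)) : ℝ) - (M.r (F i) : ℝ)))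
    (hdec : ∀ i, 1 ≤ i → i < k → lam (i + 1) < lam i)
    (hlast : 1 ≤ lam k)
    (w : ℕ → ℝ) (hw : ∀ i j, i ≤ j → j < n → w j ≤ w i) (hw0 : ∀ j < n, 0 ≤ w j)
    (OPTP OPTM : (Fin n → {a // a ∈ M.E}) → Finset α)
    (hOPTP : ∀ σ : Fin n → {a // a ∈ M.E}, Function.Bijective σ →
      OPTP σ ⊆ M.E ∧
      (∀ i < k, ((OPTP σ) ∩ (F (i + 1) \ F i)).card ≤ M.r (F (i + 1)) - M.r (F i)) ∧
      ∀ I ⊆ M.E,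
        (∀ i < k, (I ∩ (F (i + 1) \ F i)).card ≤ M.r (F (i + 1)) - M.r (F i)) →
        ∑ jj ∈ Finset.univ.filter (fun jj : Fin n => ((σ jj : α) ∈ I)), w (jj : ℕ) ≤
          ∑ jj ∈ Finset.univ.filter (fun jj : Fin n => ((σ jj : α) ∈ OPTP σ)), w (jj : ℕ))
    (hOPTM : ∀ σ : Fin n → {a // a ∈ M.E}, Function.Bijective σ →
      OPTM σ ⊆ M.E ∧ M.r (OPTM σ) = (OPTM σ).card ∧
      ∀ I ⊆ M.E, M.r I = I.card →
        ∑ jj ∈ Finset.univ.filter (fun jj : Fin n => ((σ jj : α) ∈ I)), w (jj : ℕ) ≤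
          ∑ jj ∈ Finset.univ.filter (fun jj : Fin n => ((σ jj : α) ∈ OPTM σ)), w (jj : ℕ)) :
    (1 - (Real.exp 1)⁻¹) *
        ∑ σ ∈ Finset.univ.filter
            (fun σ : Fin n → {a // a ∈ M.E} => Function.Bijective σ),
          ∑ jj ∈ Finset.univ.filter (fun jj : Fin n => ((σ jj : α) ∈ OPTM σ)), w (jj : ℕ) ≤
      ∑ σ ∈ Finset.univ.filter
          (fun σ : Fin n → {a // a ∈ M.E} => Function.Bijective σ),
        ∑ jj ∈ Finset.univ.filter (fun jj : Fin n => ((σ jj : α) ∈ OPTP σ)), w (jj : ℕ) := by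
  classical
  have hee : (0:ℝ) ≤ 1 - (Real.exp 1)⁻¹ := by
    rw [sub_nonneg, inv_le_one_iff₀]
    right
    nlinarith [Real.add_one_le_exp (1:ℝ)]
  have hd0 : ∀ t, 0 ≤ dfun n w t := dfun_nonneg hw hw0
  -- Part A
  have partA : ∀ σ ∈ Finset.univ.filter
      (fun σ : Fin n → {a // a ∈ M.E} => Function.Bijective σ),
      ∑ jj ∈ Finset.univ.filter (fun jj : Fin n => ((σ jj : α) ∈ OPTM σ)), w (jj : ℕ)
        ≤ ∑ t ∈ Finset.range n, dfun n w t * (M.r (Sm M.E σ (t+1)) : ℝ) := by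
    intro σ hσ
    have hbij : Function.Bijective σ := (Finset.mem_filter.1 hσ).2
    obtain ⟨hsub, hrank, _⟩ := hOPTM σ hbij
    rw [abel_sum]
    apply Finset.sum_le_sum
    intro t _
    apply mul_le_mul_of_nonneg_left _ (hd0 t)
    rw [pos_card _ (val_comp_injective hbij.injective)]
    have hSm : (Finset.univ.filter (fun jj : Fin n => (jj : ℕ) < t+1)).image
        (fun jj => (σ jj : α)) = Sm M.E σ (t+1) := rfl
    rw [hSm]
    exact_mod_cast M.inter_card_le_r hrank (Sm M.E σ (t+1))
  -- Ej disjointness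
  have hEjdisj : ∀ j j', j < j' → j' < k → Disjoint (F (j+1) \ F j) (F (j'+1) \ F j') := by
    intro j j' hjj hj'k
    rw [Finset.disjoint_left]
    intro x hx hx'
    have h1 : x ∈ F (j+1) := (Finset.mem_sdiff.1 hx).1
    have h2 : x ∉ F j' := (Finset.mem_sdiff.1 hx').2
    exact h2 (F_mono hchain (j+1) j' (by omega) (by omega) h1)
  -- Part B
  have partB : ∀ σ ∈ Finset.univ.filter
      (fun σ : Fin n → {a // a ∈ M.E} => Function.Bijective σ),
      ∑ t ∈ Finset.range n, dfun n w t * ∑ j ∈ Finset.range k,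
          min (((Sm M.E σ (t+1) ∩ (F (j+1) \ F j)).card : ℝ))
            (((M.r (F (j+1)) - M.r (F j) : ℕ)) : ℝ)
        ≤ ∑ jj ∈ Finset.univ.filter (fun jj : Fin n => ((σ jj : α) ∈ OPTP σ)), w (jj : ℕ) := by
    intro σ hσ
    have hbij : Function.Bijective σ := (Finset.mem_filter.1 hσ).2
    have hinj := val_comp_injective (E := M.E) (σ := σ) hbij.injective
    have hsel : ∀ j : ℕ, ∃ T ⊆ Finset.univ.filter
        (fun jj : Fin n => (σ jj : α) ∈ F (j+1) \ F j),
        ∀ m : ℕ, ((T.filter (fun jj : Fin n => (jj : ℕ) < m)).card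
          = min (((Finset.univ.filter (fun jj : Fin n => (σ jj : α) ∈ F (j+1) \ F j)).filter
              (fun jj : Fin n => (jj : ℕ) < m)).card) (M.r (F (j+1)) - M.r (F j))) :=
      fun j => exists_selection _ _
    choose T hT1 hT2 using hsel
    have hTmem : ∀ j, ∀ jj ∈ T j, (σ jj : α) ∈ F (j+1) \ F j := by
      intro j jj hjj
      exact (Finset.mem_filter.1 (hT1 j hjj)).2
    have hTdisj : ∀ j1 ∈ Finset.range k, ∀ j2 ∈ Finset.range k, j1 ≠ j2 →
        Disjoint (T j1) (T j2) := by
      intro j1 hj1 j2 hj2 hne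
      rw [Finset.disjoint_left]
      intro jj h1 h2
      have e1 := hTmem j1 jj h1
      have e2 := hTmem j2 jj h2
      rcases Nat.lt_or_ge j1 j2 with h | h
      · exact (Finset.disjoint_left.1 (hEjdisj j1 j2 h (Finset.mem_range.1 hj2))) e1 e2
      · have : j2 < j1 := by omega
        exact (Finset.disjoint_left.1 (hEjdisj j2 j1 this (Finset.mem_range.1 hj1))) e2 e1
    set U : Finset (Fin n) := (Finset.range k).biUnion T with hU
    set I : Finset α := U.image (fun jj => (σ jj : α)) with hI
    have hIE : I ⊆ M.E := by
      intro x hx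
      obtain ⟨jj, _, rfl⟩ := Finset.mem_image.1 hx
      exact (σ jj).2
    have hIcapEj : ∀ j < k, I ∩ (F (j+1) \ F j) = (T j).image (fun jj => (σ jj : α)) := by
      intro j hjk
      ext x
      simp only [Finset.mem_inter, hI, Finset.mem_image]
      constructor
      · rintro ⟨⟨jj, hjjU, rfl⟩, hxEj⟩
        rw [hU] at hjjU
        obtain ⟨j', hj', hjjT⟩ := Finset.mem_biUnion.1 hjjU
        have := hTmem j' jj hjjT
        by_cases hjj' : j' = j
        · exact ⟨jj, hjj' ▸ hjjT, rfl⟩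
        · exfalso
          rcases Nat.lt_or_ge j' j with h | h
          · exact (Finset.disjoint_left.1 (hEjdisj j' j h hjk)) this hxEj
          · have : j < j' := by omega
            exact (Finset.disjoint_left.1 (hEjdisj j j' this (Finset.mem_range.1 hj')))
              hxEj (hTmem j' jj hjjT)
      · rintro ⟨jj, hjjT, rfl⟩
        refine ⟨⟨jj, ?_, rfl⟩, hTmem j jj hjjT⟩
        rw [hU]
        exact Finset.mem_biUnion.2 ⟨j, Finset.mem_range.2 hjk, hjjT⟩
    have hTcard : ∀ j, (T j).card ≤ M.r (F (j+1)) - M.r (F j) := by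
      intro j
      have h := hT2 j n
      have heq : (T j).filter (fun jj : Fin n => (jj : ℕ) < n) = T j :=
        Finset.filter_true_of_mem (fun jj _ => jj.2)
      rw [heq] at h
      rw [h]
      exact min_le_right _ _
    have hconstr : ∀ i < k, (I ∩ (F (i+1) \ F i)).card ≤ M.r (F (i+1)) - M.r (F i) := by
      intro i hik
      rw [hIcapEj i hik, Finset.card_image_of_injective _ hinj]
      exact hTcard i
    have hopt := (hOPTP σ hbij).2.2 I hIE hconstr
    have hAI : Finset.univ.filter (fun jj : Fin n => (σ jj : α) ∈ I) = U := by
      ext jj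
      simp only [Finset.mem_filter, Finset.mem_univ, true_and, hI, Finset.mem_image]
      constructor
      · rintro ⟨jj', hjj', heq⟩
        have hjjeq : jj' = jj := hinj heq
        exact hjjeq ▸ hjj'
      · intro hjj
        exact ⟨jj, hjj, rfl⟩
    have hwU : ∑ jj ∈ U, w (jj : ℕ)
        = ∑ t ∈ Finset.range n, dfun n w t *
            ((U.filter (fun jj : Fin n => (jj : ℕ) < t + 1)).card : ℝ) := abel_sum w U
    have hUcount : ∀ t : ℕ, ((U.filter (fun jj : Fin n => (jj : ℕ) < t + 1)).card : ℝ)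
        = ∑ j ∈ Finset.range k,
            min (((Sm M.E σ (t+1) ∩ (F (j+1) \ F j)).card : ℝ))
              (((M.r (F (j+1)) - M.r (F j) : ℕ)) : ℝ) := by
      intro t
      rw [hU, Finset.filter_biUnion, Finset.card_biUnion]
      · push_cast
        apply Finset.sum_congr rfl
        intro j _
        rw [hT2 j (t+1)]
        rw [pos_card _ hinj]
        have hSm : (Finset.univ.filter (fun jj : Fin n => (jj : ℕ) < t+1)).image
            (fun jj => (σ jj : α)) = Sm M.E σ (t+1) := rfl
        rw [hSm, Finset.inter_comm]
        push_cast [Nat.cast_min]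
        ring_nf
      · intro j1 hj1 j2 hj2 hne
        exact Finset.disjoint_filter_filter (hTdisj j1 hj1 j2 hj2 hne)
    calc ∑ t ∈ Finset.range n, dfun n w t * ∑ j ∈ Finset.range k,
            min (((Sm M.E σ (t+1) ∩ (F (j+1) \ F j)).card : ℝ))
              (((M.r (F (j+1)) - M.r (F j) : ℕ)) : ℝ)
        = ∑ jj ∈ U, w (jj : ℕ) := by
          rw [hwU]
          apply Finset.sum_congr rfl
          intro t _
          rw [hUcount t]
      _ = ∑ jj ∈ Finset.univ.filter (fun jj : Fin n => (σ jj : α) ∈ I), w (jj : ℕ) := by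
          rw [hAI]
      _ ≤ _ := hopt
  -- per-t core
  have hcore : ∀ t ∈ Finset.range n,
      (1 - (Real.exp 1)⁻¹) * ∑ σ ∈ Finset.univ.filter
          (fun σ : Fin n → {a // a ∈ M.E} => Function.Bijective σ),
          (M.r (Sm M.E σ (t+1)) : ℝ)
        ≤ ∑ σ ∈ Finset.univ.filter
            (fun σ : Fin n → {a // a ∈ M.E} => Function.Bijective σ),
            ∑ j ∈ Finset.range k,
              min (((Sm M.E σ (t+1) ∩ (F (j+1) \ F j)).card : ℝ))
                (((M.r (F (j+1)) - M.r (F j) : ℕ)) : ℝ) := by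
    intro t ht
    have htn : t + 1 ≤ n := Finset.mem_range.1 ht
    obtain ⟨c, hc0, hc⟩ := orbit_reduce M.E hcard htn
    rw [hc (fun S => (M.r S : ℝ)),
      hc (fun S => ∑ j ∈ Finset.range k,
        min (((S ∩ (F (j+1) \ F j)).card : ℝ)) (((M.r (F (j+1)) - M.r (F j) : ℕ)) : ℝ))]
    have hco := core_ineq M hcard F hF0 hFk hchain hri lam hlam hdec htn
    calc (1 - (Real.exp 1)⁻¹) * (c * ∑ S ∈ M.E.powersetCard (t+1), (M.r S : ℝ))
        = c * ((1 - (Real.exp 1)⁻¹) * ∑ S ∈ M.E.powersetCard (t+1), (M.r S : ℝ)) := by ring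
      _ ≤ c * ∑ S ∈ M.E.powersetCard (t+1), ∑ j ∈ Finset.range k,
            min (((S ∩ (F (j+1) \ F j)).card : ℝ)) (((M.r (F (j+1)) - M.r (F j) : ℕ)) : ℝ) :=
          mul_le_mul_of_nonneg_left hco hc0
  -- assembly
  have step1 : (1 - (Real.exp 1)⁻¹) *
      ∑ σ ∈ Finset.univ.filter (fun σ : Fin n → {a // a ∈ M.E} => Function.Bijective σ),
        ∑ jj ∈ Finset.univ.filter (fun jj : Fin n => ((σ jj : α) ∈ OPTM σ)), w (jj : ℕ)
      ≤ (1 - (Real.exp 1)⁻¹) *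
        ∑ σ ∈ Finset.univ.filter (fun σ : Fin n → {a // a ∈ M.E} => Function.Bijective σ),
          ∑ t ∈ Finset.range n, dfun n w t * (M.r (Sm M.E σ (t+1)) : ℝ) :=
    mul_le_mul_of_nonneg_left (Finset.sum_le_sum partA) hee
  have hswapA : ∑ σ ∈ Finset.univ.filter
        (fun σ : Fin n → {a // a ∈ M.E} => Function.Bijective σ),
        ∑ t ∈ Finset.range n, dfun n w t * (M.r (Sm M.E σ (t+1)) : ℝ)
      = ∑ t ∈ Finset.range n, dfun n w t * ∑ σ ∈ Finset.univ.filter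
          (fun σ : Fin n → {a // a ∈ M.E} => Function.Bijective σ),
          (M.r (Sm M.E σ (t+1)) : ℝ) := by
    rw [Finset.sum_comm]
    exact Finset.sum_congr rfl (fun t _ => (Finset.mul_sum _ _ _).symm)
  have hswapB : ∑ σ ∈ Finset.univ.filter
        (fun σ : Fin n → {a // a ∈ M.E} => Function.Bijective σ),
        ∑ t ∈ Finset.range n, dfun n w t * ∑ j ∈ Finset.range k,
          min (((Sm M.E σ (t+1) ∩ (F (j+1) \ F j)).card : ℝ))
            (((M.r (F (j+1)) - M.r (F j) : ℕ)) : ℝ)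
      = ∑ t ∈ Finset.range n, dfun n w t * ∑ σ ∈ Finset.univ.filter
          (fun σ : Fin n → {a // a ∈ M.E} => Function.Bijective σ),
          ∑ j ∈ Finset.range k,
            min (((Sm M.E σ (t+1) ∩ (F (j+1) \ F j)).card : ℝ))
              (((M.r (F (j+1)) - M.r (F j) : ℕ)) : ℝ) := by
    rw [Finset.sum_comm]
    exact Finset.sum_congr rfl (fun t _ => (Finset.mul_sum _ _ _).symm)
  have step2 : (1 - (Real.exp 1)⁻¹) *
      ∑ σ ∈ Finset.univ.filter (fun σ : Fin n → {a // a ∈ M.E} => Function.Bijective σ),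
        ∑ t ∈ Finset.range n, dfun n w t * (M.r (Sm M.E σ (t+1)) : ℝ)
      ≤ ∑ σ ∈ Finset.univ.filter (fun σ : Fin n → {a // a ∈ M.E} => Function.Bijective σ),
        ∑ t ∈ Finset.range n, dfun n w t * ∑ j ∈ Finset.range k,
          min (((Sm M.E σ (t+1) ∩ (F (j+1) \ F j)).card : ℝ))
            (((M.r (F (j+1)) - M.r (F j) : ℕ)) : ℝ) := by
    rw [hswapA, hswapB, Finset.mul_sum]
    apply Finset.sum_le_sum
    intro t ht
    calc (1 - (Real.exp 1)⁻¹) * (dfun n w t * ∑ σ ∈ Finset.univ.filter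
            (fun σ : Fin n → {a // a ∈ M.E} => Function.Bijective σ),
            (M.r (Sm M.E σ (t+1)) : ℝ))
        = dfun n w t * ((1 - (Real.exp 1)⁻¹) * ∑ σ ∈ Finset.univ.filter
            (fun σ : Fin n → {a // a ∈ M.E} => Function.Bijective σ),
            (M.r (Sm M.E σ (t+1)) : ℝ)) := by ring
      _ ≤ dfun n w t * ∑ σ ∈ Finset.univ.filter
            (fun σ : Fin n → {a // a ∈ M.E} => Function.Bijective σ),
            ∑ j ∈ Finset.range k,
              min (((Sm M.E σ (t+1) ∩ (F (j+1) \ F j)).card : ℝ))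
                (((M.r (F (j+1)) - M.r (F j) : ℕ)) : ℝ) :=
          mul_le_mul_of_nonneg_left (hcore t ht) (hd0 t)
  calc (1 - (Real.exp 1)⁻¹) *
      ∑ σ ∈ Finset.univ.filter (fun σ : Fin n → {a // a ∈ M.E} => Function.Bijective σ),
        ∑ jj ∈ Finset.univ.filter (fun jj : Fin n => ((σ jj : α) ∈ OPTM σ)), w (jj : ℕ)
      ≤ (1 - (Real.exp 1)⁻¹) *
        ∑ σ ∈ Finset.univ.filter (fun σ : Fin n → {a // a ∈ M.E} => Function.Bijective σ),
          ∑ t ∈ Finset.range n, dfun n w t * (M.r (Sm M.E σ (t+1)) : ℝ) := step1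
    _ ≤ ∑ σ ∈ Finset.univ.filter (fun σ : Fin n → {a // a ∈ M.E} => Function.Bijective σ),
        ∑ t ∈ Finset.range n, dfun n w t * ∑ j ∈ Finset.range k,
          min (((Sm M.E σ (t+1) ∩ (F (j+1) \ F j)).card : ℝ))
            (((M.r (F (j+1)) - M.r (F j) : ℕ)) : ℝ) := step2
    _ ≤ _ := Finset.sum_le_sum partB
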